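/- arXiv:0708.3956 — 2 statements merged into one kernel-verified Lean document; each statement's English description precedes it below -/
import Mathlib

section
/- For all A, B > 0, with a, b and h(x) = (2+A+B)/(2π(1−x²)) as for the varying Jacobi weight, the limit of n·(b_{n,n} − (a+b)/2) as n → ∞, where b_{n,n} = (B²−A²)/((2+A+B)(2+A+B+2/n)), equals (1/(2π(b−a)))·(1/h(b) − 1/h(a)). In other words, the explicit Jacobi formula verifies β₁ = (1/(2π(b−a)))(1/h(b) − 1/h(a)). -/
open Filter Topology

/-- For varying Jacobi polynomials, with `b_{n,n} = (B²−A²)/((2+A+B)(2+A+B+2/n))`,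
the limit of `n (b_{n,n} − (a+b)/2)` as `n → ∞` equals
`(1/(2π(b−a)))(1/h(b) − 1/h(a))` where `h(x) = (2+A+B)/(2π(1−x²))`:
the explicit Jacobi formula verifies the value of `β₁`. -/
theorem jacobi_beta_one (A B : ℝ) (hA : 0 < A) (hB : 0 < B)
    (a b : ℝ) (h : ℝ → ℝ)
    (ha : a = (B ^ 2 - A ^ 2 - 4 * Real.sqrt ((1 + A + B) * (1 + A) * (1 + B))) /
      (2 + A + B) ^ 2)
    (hb : b = (B ^ 2 - A ^ 2 + 4 * Real.sqrt ((1 + A + B) * (1 + A) * (1 + B))) /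
      (2 + A + B) ^ 2)
    (hh : ∀ x : ℝ, h x = (2 + A + B) / (2 * Real.pi * (1 - x ^ 2))) :
    Tendsto
      (fun n : ℕ =>
        (n : ℝ) * ((B ^ 2 - A ^ 2) / ((2 + A + B) * (2 + A + B + 2 / (n : ℝ))) -
          (a + b) / 2))
      atTop
      (𝓝 (1 / (2 * Real.pi * (b - a)) * (1 / h b - 1 / h a))) := by
  have hs : (0:ℝ) < 2 + A + B := by linarith
  have hs' : (2 + A + B : ℝ) ≠ 0 := ne_of_gt hs
  have hsq : 0 < Real.sqrt ((1 + A + B) * (1 + A) * (1 + B)) := by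
    apply Real.sqrt_pos.2
    positivity
  have hpi : Real.pi ≠ 0 := Real.pi_ne_zero
  -- value of the limit
  have hba : b - a = 8 * Real.sqrt ((1 + A + B) * (1 + A) * (1 + B)) / (2 + A + B) ^ 2 := by
    rw [ha, hb]; ring
  have hbane : b - a ≠ 0 := by
    rw [hba]; positivity
  have hab : a + b = 2 * (B ^ 2 - A ^ 2) / (2 + A + B) ^ 2 := by
    rw [ha, hb]; ring
  have hval : 1 / (2 * Real.pi * (b - a)) * (1 / h b - 1 / h a)
      = -2 * (B ^ 2 - A ^ 2) / ((2 + A + B) ^ 2 * (2 + A + B)) := by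
    have h1 : 1 / h b = 2 * Real.pi * (1 - b ^ 2) / (2 + A + B) := by
      rw [hh b, one_div_div]
    have h2 : 1 / h a = 2 * Real.pi * (1 - a ^ 2) / (2 + A + B) := by
      rw [hh a, one_div_div]
    rw [h1, h2]
    have key : 1 / (2 * Real.pi * (b - a)) *
        (2 * Real.pi * (1 - b ^ 2) / (2 + A + B) - 2 * Real.pi * (1 - a ^ 2) / (2 + A + B))
        = -(a + b) / (2 + A + B) := by
      field_simp
      ring
    rw [key, hab]
    field_simp
  rw [hval]
  -- eventual equality with a simpler expression
  have heq : ∀ᶠ n : ℕ in atTop,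
      (n : ℝ) * ((B ^ 2 - A ^ 2) / ((2 + A + B) * (2 + A + B + 2 / (n : ℝ))) -
        (a + b) / 2)
      = -2 * (B ^ 2 - A ^ 2) / ((2 + A + B) ^ 2 * (2 + A + B + 2 / (n : ℝ))) := by
    filter_upwards [eventually_ge_atTop 1] with n hn
    have hn0 : (n : ℝ) ≠ 0 := by
      exact_mod_cast Nat.one_le_iff_ne_zero.mp hn
    have hnpos : (0:ℝ) < n := by positivity
    have hd : (0:ℝ) < 2 + A + B + 2 / (n : ℝ) := by positivity
    rw [hab]
    field_simp
    ring
  rw [tendsto_congr' heq]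
  -- limit computation
  have hdiv : Tendsto (fun n : ℕ => 2 / (n : ℝ)) atTop (𝓝 0) :=
    tendsto_const_div_atTop_nhds_zero_nat 2
  have hden : Tendsto (fun n : ℕ => (2 + A + B) ^ 2 * (2 + A + B + 2 / (n : ℝ))) atTop
      (𝓝 ((2 + A + B) ^ 2 * (2 + A + B))) := by
    have : Tendsto (fun n : ℕ => 2 + A + B + 2 / (n : ℝ)) atTop (𝓝 (2 + A + B + 0)) :=
      tendsto_const_nhds.add hdiv
    rw [add_zero] at this
    exact tendsto_const_nhds.mul this
  exact tendsto_const_nhds.div hden (by positivity)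
end

section
/- Suppose a sequence (uₙ) of complex numbers has an asymptotic expansion uₙ ∼ iα + ∑_{m odd} pₘ/nᵐ − i∑_{m even, m≥2} qₘ/nᵐ and (vₙ) has vₙ ∼ −iα + ∑_{m odd} pₘ/nᵐ + i∑_{m even} qₘ/nᵐ, with α, pₘ, qₘ real. Then the product uₙvₙ has an asymptotic expansion in powers of 1/n containing only even powers: uₙvₙ ∼ α² + ∑_{m≥1} cₘ/n^{2m} for some real constants cₘ. -/
open Complex Finset

namespace PEE

noncomputable def aa (α : ℝ) (p q : ℕ → ℝ) : ℕ → ℂ :=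
  fun m => if m = 0 then I * α else if Odd m then ((p m : ℝ) : ℂ) else -(I * ((q m : ℝ) : ℂ))

noncomputable def bb (α : ℝ) (p q : ℕ → ℝ) : ℕ → ℂ :=
  fun m => if m = 0 then -(I * α) else if Odd m then ((p m : ℝ) : ℂ) else I * ((q m : ℝ) : ℂ)

noncomputable def dd (α : ℝ) (p q : ℕ → ℝ) (k : ℕ) : ℂ :=
  ∑ j ∈ range (k + 1), aa α p q j * bb α p q (k - j)

variable (α : ℝ) (p q : ℕ → ℝ)

lemma bb_eq (m : ℕ) : bb α p q m = -((-1 : ℂ) ^ m) * aa α p q m := by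
  rcases Nat.even_or_odd m with hm | hm
  · rcases eq_or_ne m 0 with rfl | h0
    · simp [aa, bb]
    · have : ¬ Odd m := by simpa [Nat.not_odd_iff_even] using hm
      simp [aa, bb, h0, this, hm.neg_one_pow]
  · have h0 : m ≠ 0 := by rintro rfl; simp at hm
    simp [aa, bb, h0, hm, hm.neg_one_pow]

lemma conj_aa (m : ℕ) : (starRingEnd ℂ) (aa α p q m) = bb α p q m := by
  rcases eq_or_ne m 0 with rfl | h0
  · simp [aa, bb]
  · by_cases hm : Odd m <;> simp [aa, bb, h0, hm]

lemma conj_bb (m : ℕ) : (starRingEnd ℂ) (bb α p q m) = aa α p q m := by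
  rw [← conj_aa α p q m, Complex.conj_conj]

lemma dd_odd {k : ℕ} (hk : Odd k) : dd α p q k = 0 := by
  have key : ∀ j ≤ k, aa α p q (k - j) * bb α p q j = -(aa α p q j * bb α p q (k - j)) := by
    intro j hj
    set s : ℂ := (-1 : ℂ) ^ j with hs
    set t : ℂ := (-1 : ℂ) ^ (k - j) with ht
    have hst : s * t = -1 := by
      rw [hs, ht, ← pow_add, add_comm, Nat.sub_add_cancel hj, hk.neg_one_pow]
    have hss : s * s = 1 := by
      rw [hs, ← pow_add, ← two_mul]
      exact Even.neg_one_pow ⟨j, two_mul j⟩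
    have hts : t = -s := by
      have : s * (s * t) = s * (-1) := by rw [hst]
      rw [← mul_assoc, hss, one_mul] at this
      linear_combination this
    rw [bb_eq α p q j, bb_eq α p q (k - j), ← hs, ← ht, hts]
    ring
  have hrefl : dd α p q k = ∑ j ∈ range (k + 1), aa α p q (k - j) * bb α p q (k - (k - j)) := by
    rw [dd, ← Finset.sum_range_reflect]
    simp
  have : dd α p q k = -(dd α p q k) := by
    nth_rewrite 1 [hrefl]
    rw [dd, ← Finset.sum_neg_distrib]
    refine Finset.sum_congr rfl fun j hj => ?_
    have hj' : j ≤ k := Nat.lt_succ_iff.mp (Finset.mem_range.mp hj)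
    rw [Nat.sub_sub_self hj', key j hj']
  exact CharZero.eq_neg_self_iff.mp this

lemma conj_dd (k : ℕ) : (starRingEnd ℂ) (dd α p q k) = dd α p q k := by
  rw [dd, map_sum]
  have : ∀ j ∈ range (k + 1),
      (starRingEnd ℂ) (aa α p q j * bb α p q (k - j))
        = aa α p q (k - j) * bb α p q (k - (k - j)) := by
    intro j hj
    have hj' : j ≤ k := Nat.lt_succ_iff.mp (Finset.mem_range.mp hj)
    rw [map_mul, conj_aa, conj_bb, Nat.sub_sub_self hj', mul_comm]
  rw [Finset.sum_congr rfl this, ← Finset.sum_range_reflect]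
  refine Finset.sum_congr rfl fun j hj => ?_
  have hj' : j ≤ k := Nat.lt_succ_iff.mp (Finset.mem_range.mp hj)
  simp only [Nat.add_sub_cancel]
  rw [Nat.sub_sub_self hj']

lemma dd_real (k : ℕ) : (((dd α p q k).re : ℝ) : ℂ) = dd α p q k :=
  Complex.conj_eq_iff_re.mp (conj_dd α p q k)

lemma dd_zero : dd α p q 0 = (α : ℂ) ^ 2 := by
  simp [dd, aa, bb]
  linear_combination (-(α : ℂ) ^ 2) * Complex.I_sq


lemma conv_split (f g : ℕ → ℂ) (x : ℂ) (L : ℕ) :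
    (∑ i ∈ range (L + 1), f i * x ^ i) * (∑ j ∈ range (L + 1), g j * x ^ j)
      = (∑ k ∈ range (L + 1), (∑ j ∈ range (k + 1), f j * g (k - j)) * x ^ k)
        + ∑ pr ∈ (range (L + 1) ×ˢ range (L + 1)).filter (fun pr => L + 1 ≤ pr.1 + pr.2),
            f pr.1 * g pr.2 * x ^ (pr.1 + pr.2) := by
  have h1 : (∑ i ∈ range (L + 1), f i * x ^ i) * (∑ j ∈ range (L + 1), g j * x ^ j)
      = ∑ pr ∈ range (L + 1) ×ˢ range (L + 1), f pr.1 * g pr.2 * x ^ (pr.1 + pr.2) := by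
    rw [Finset.sum_mul_sum, ← Finset.sum_product']
    exact Finset.sum_congr rfl fun pr _ => by rw [pow_add]; ring
  rw [h1, ← Finset.sum_filter_add_sum_filter_not _ (fun pr => pr.1 + pr.2 ≤ L)]
  congr 1
  · have hset : (range (L + 1) ×ˢ range (L + 1)).filter (fun pr => pr.1 + pr.2 ≤ L)
        = (range (L + 1)).biUnion (fun k => Finset.HasAntidiagonal.antidiagonal k) := by
      ext pr
      simp only [mem_filter, mem_product, mem_range, Nat.lt_succ_iff, mem_biUnion,
        Finset.HasAntidiagonal.mem_antidiagonal]
      constructor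
      · rintro ⟨⟨h1, h2⟩, h3⟩
        exact ⟨pr.1 + pr.2, h3, rfl⟩
      · rintro ⟨k, hk, hpk⟩
        refine ⟨⟨?_, ?_⟩, ?_⟩ <;> omega
    have hdisj : ((range (L + 1) : Finset ℕ) : Set ℕ).PairwiseDisjoint
        (fun k => (Finset.HasAntidiagonal.antidiagonal k : Finset (ℕ × ℕ))) := by
      intro k _ k' _ hkk'
      simp only [Function.onFun]
      rw [Finset.disjoint_left]
      intro pr hpr hpr'
      rw [Finset.HasAntidiagonal.mem_antidiagonal] at hpr hpr'
      exact hkk' (hpr ▸ hpr')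
    rw [hset, Finset.sum_biUnion hdisj]
    refine Finset.sum_congr rfl fun k _ => ?_
    have : ∀ pr ∈ Finset.HasAntidiagonal.antidiagonal k,
        f pr.1 * g pr.2 * x ^ (pr.1 + pr.2) = f pr.1 * g pr.2 * x ^ k := by
      intro pr hpr
      rw [Finset.HasAntidiagonal.mem_antidiagonal.mp hpr]
    rw [Finset.sum_congr rfl this,
      Finset.Nat.sum_antidiagonal_eq_sum_range_succ (fun i j => f i * g j * x ^ k) k,
      Finset.sum_mul]
  · refine Finset.sum_congr ?_ fun _ _ => rfl
    ext pr
    simp only [mem_filter, mem_product, mem_range, not_le, Nat.lt_succ_iff]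
    omega

lemma range_succ_insert (L : ℕ) : range (L + 1) = insert 0 (Icc 1 L) := by
  ext m
  simp only [mem_range, mem_insert, mem_Icc, Nat.lt_succ_iff]
  omega

lemma A_eq (n : ℕ) (hn : 1 ≤ n) (L : ℕ) :
    I * (α : ℂ) + ∑ m ∈ Icc 1 L,
        (if Odd m then ((p m : ℝ) : ℂ) else -(I * ((q m : ℝ) : ℂ))) / (n : ℂ) ^ m
      = ∑ m ∈ range (L + 1), aa α p q m * ((n : ℂ)⁻¹) ^ m := by
  rw [range_succ_insert, Finset.sum_insert (by simp)]
  have h0 : aa α p q 0 * ((n : ℂ)⁻¹) ^ 0 = I * (α : ℂ) := by simp [aa]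
  rw [h0]
  congr 1
  refine Finset.sum_congr rfl fun m hm => ?_
  have hm1 : m ≠ 0 := by
    have := (mem_Icc.mp hm).1; omega
  rw [aa, if_neg hm1, div_eq_mul_inv, inv_pow]

lemma B_eq (n : ℕ) (hn : 1 ≤ n) (L : ℕ) :
    -(I * (α : ℂ)) + ∑ m ∈ Icc 1 L,
        (if Odd m then ((p m : ℝ) : ℂ) else I * ((q m : ℝ) : ℂ)) / (n : ℂ) ^ m
      = ∑ m ∈ range (L + 1), bb α p q m * ((n : ℂ)⁻¹) ^ m := by
  rw [range_succ_insert, Finset.sum_insert (by simp)]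
  have h0 : bb α p q 0 * ((n : ℂ)⁻¹) ^ 0 = -(I * (α : ℂ)) := by simp [bb]
  rw [h0]
  congr 1
  refine Finset.sum_congr rfl fun m hm => ?_
  have hm1 : m ≠ 0 := by
    have := (mem_Icc.mp hm).1; omega
  rw [bb, if_neg hm1, div_eq_mul_inv, inv_pow]

lemma T_eq (x : ℂ) (l : ℕ) :
    ∑ k ∈ range (2 * l + 2), dd α p q k * x ^ k
      = (α : ℂ) ^ 2 + ∑ m ∈ Icc 1 l, (((dd α p q (2 * m)).re : ℝ) : ℂ) * x ^ (2 * m) := by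
  induction l with
  | zero =>
    simp [Finset.sum_range_succ, dd_zero, dd_odd α p q (odd_one)]
  | succ l ih =>
    have h1 : 2 * (l + 1) + 2 = (2 * l + 2) + 1 + 1 := by ring
    rw [h1, Finset.sum_range_succ, Finset.sum_range_succ, ih]
    have hodd : dd α p q (2 * l + 2 + 1) = 0 := dd_odd α p q ⟨l + 1, by ring⟩
    have htop : ∑ m ∈ Icc 1 (l + 1), (((dd α p q (2 * m)).re : ℝ) : ℂ) * x ^ (2 * m)
        = (∑ m ∈ Icc 1 l, (((dd α p q (2 * m)).re : ℝ) : ℂ) * x ^ (2 * m))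
          + (((dd α p q (2 * (l + 1))).re : ℝ) : ℂ) * x ^ (2 * (l + 1)) := by
      rw [Finset.sum_Icc_succ_top (by omega)]
    rw [htop, hodd, dd_real α p q (2 * (l + 1))]
    have h2 : 2 * (l + 1) = 2 * l + 2 := by ring
    rw [h2]
    ring

end PEE

open PEE

/-- If `uₙ ∼ iα + ∑_{m odd} pₘ/nᵐ − i ∑_{m even} qₘ/nᵐ` and
`vₙ ∼ −iα + ∑_{m odd} pₘ/nᵐ + i ∑_{m even} qₘ/nᵐ` with `α, pₘ, qₘ` real, then
`uₙvₙ` has an asymptotic expansion containing only even powers of `1/n`: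
`uₙvₙ ∼ α² + ∑_{m≥1} cₘ/n^{2m}` for some real constants `cₘ`. -/
theorem product_even_expansion (α : ℝ) (p q : ℕ → ℝ) (u v : ℕ → ℂ)
    (hu : ∀ l : ℕ, ∃ C : ℝ, ∀ n : ℕ, 1 ≤ n →
      ‖(u n - (I * (α : ℂ) +
        ∑ m ∈ Finset.Icc 1 l,
          (if Odd m then ((p m : ℝ) : ℂ) else -(I * ((q m : ℝ) : ℂ))) / (n : ℂ) ^ m))‖ ≤
        C / (n : ℝ) ^ (l + 1))
    (hv : ∀ l : ℕ, ∃ C : ℝ, ∀ n : ℕ, 1 ≤ n →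
      ‖(v n - (-(I * (α : ℂ)) +
        ∑ m ∈ Finset.Icc 1 l,
          (if Odd m then ((p m : ℝ) : ℂ) else I * ((q m : ℝ) : ℂ)) / (n : ℂ) ^ m))‖ ≤
        C / (n : ℝ) ^ (l + 1)) :
    ∃ c : ℕ → ℝ, ∀ l : ℕ, ∃ C : ℝ, ∀ n : ℕ, 1 ≤ n →
      ‖(u n * v n - (((α : ℂ) ^ 2) +
        ∑ m ∈ Finset.Icc 1 l, ((c m : ℝ) : ℂ) / (n : ℂ) ^ (2 * m)))‖ ≤
      C / (n : ℝ) ^ (2 * l + 2) := by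
  refine ⟨fun m => (dd α p q (2 * m)).re, fun l => ?_⟩
  set L : ℕ := 2 * l + 1 with hL
  obtain ⟨C₁, hC₁⟩ := hu L
  obtain ⟨C₂, hC₂⟩ := hv L
  -- nonnegativity of the constants
  have hC₁0 : 0 ≤ C₁ := le_trans (norm_nonneg _) (by simpa using hC₁ 1 le_rfl)
  have hC₂0 : 0 ≤ C₂ := le_trans (norm_nonneg _) (by simpa using hC₂ 1 le_rfl)
  set MA : ℝ := ∑ m ∈ range (L + 1), ‖aa α p q m‖ with hMA
  set MB : ℝ := ∑ m ∈ range (L + 1), ‖bb α p q m‖ with hMB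
  set K : ℝ := ∑ pr ∈ range (L + 1) ×ˢ range (L + 1),
      ‖aa α p q pr.1‖ * ‖bb α p q pr.2‖ with hK
  refine ⟨C₁ * (MB + C₂) + MA * C₂ + K, fun n hn => ?_⟩
  -- basic facts about n
  have hn1 : (1 : ℝ) ≤ (n : ℝ) := by exact_mod_cast hn
  have hn0 : (0 : ℝ) < (n : ℝ) := lt_of_lt_of_le one_pos hn1
  have hnc : ((n : ℂ)) ≠ 0 := by
    exact_mod_cast Nat.cast_ne_zero.mpr (by omega)
  set x : ℂ := ((n : ℂ))⁻¹ with hx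
  have hxabs : ‖x‖ = ((n : ℝ))⁻¹ := by
    rw [hx, norm_inv, Complex.norm_natCast]
  have hxle1 : ‖x‖ ≤ 1 := by
    rw [hxabs]; exact inv_le_one_of_one_le₀ hn1
  have hnpow : (0 : ℝ) < (n : ℝ) ^ (L + 1) := pow_pos hn0 _
  have hnpow1 : (1 : ℝ) ≤ (n : ℝ) ^ (L + 1) := one_le_pow₀ hn1
  set A : ℂ := ∑ m ∈ range (L + 1), aa α p q m * x ^ m with hA
  set B : ℂ := ∑ m ∈ range (L + 1), bb α p q m * x ^ m with hB
  have huA : ‖u n - A‖ ≤ C₁ / (n : ℝ) ^ (L + 1) := by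
    rw [hA, ← A_eq α p q n hn L]; exact hC₁ n hn
  have hvB : ‖v n - B‖ ≤ C₂ / (n : ℝ) ^ (L + 1) := by
    rw [hB, ← B_eq α p q n hn L]; exact hC₂ n hn
  -- |A| ≤ MA
  have hAbound : ‖A‖ ≤ MA := by
    refine le_trans (norm_sum_le _ _) (Finset.sum_le_sum fun m _ => ?_)
    rw [norm_mul, norm_pow]
    calc ‖aa α p q m‖ * ‖x‖ ^ m
        ≤ ‖aa α p q m‖ * 1 := by
          refine mul_le_mul_of_nonneg_left ?_ (norm_nonneg _)
          exact pow_le_one₀ (norm_nonneg _) hxle1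
      _ = ‖aa α p q m‖ := mul_one _
  have hBbound : ‖B‖ ≤ MB := by
    refine le_trans (norm_sum_le _ _) (Finset.sum_le_sum fun m _ => ?_)
    rw [norm_mul, norm_pow]
    calc ‖bb α p q m‖ * ‖x‖ ^ m
        ≤ ‖bb α p q m‖ * 1 := by
          refine mul_le_mul_of_nonneg_left ?_ (norm_nonneg _)
          exact pow_le_one₀ (norm_nonneg _) hxle1
      _ = ‖bb α p q m‖ := mul_one _
  have hvbound : ‖v n‖ ≤ MB + C₂ := by
    calc ‖v n‖ = ‖B + (v n - B)‖ := by ring_nf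
      _ ≤ ‖B‖ + ‖v n - B‖ := norm_add_le _ _
      _ ≤ MB + C₂ / (n : ℝ) ^ (L + 1) := add_le_add hBbound hvB
      _ ≤ MB + C₂ := by
          have : C₂ / (n : ℝ) ^ (L + 1) ≤ C₂ := by
            rw [div_le_iff₀ hnpow]
            nlinarith
          linarith
  -- product splitting
  have hsplit := conv_split (aa α p q) (bb α p q) x L
  set R : ℂ := ∑ pr ∈ (range (L + 1) ×ˢ range (L + 1)).filter (fun pr => L + 1 ≤ pr.1 + pr.2),
      aa α p q pr.1 * bb α p q pr.2 * x ^ (pr.1 + pr.2) with hR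
  have hMA0 : 0 ≤ MA := by
    rw [hMA]; exact Finset.sum_nonneg fun _ _ => norm_nonneg _
  have hMB0 : 0 ≤ MB := by
    rw [hMB]; exact Finset.sum_nonneg fun _ _ => norm_nonneg _
  have hABT : A * B = (∑ k ∈ range (L + 1), dd α p q k * x ^ k) + R := by
    rw [hA, hB, hsplit, hR]
    simp only [dd]
  have hRbound : ‖R‖ ≤ K / (n : ℝ) ^ (L + 1) := by
    calc ‖R‖
        ≤ ∑ pr ∈ (range (L + 1) ×ˢ range (L + 1)).filter (fun pr => L + 1 ≤ pr.1 + pr.2),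
            ‖aa α p q pr.1 * bb α p q pr.2 * x ^ (pr.1 + pr.2)‖ :=
          norm_sum_le _ _
      _ ≤ ∑ pr ∈ (range (L + 1) ×ˢ range (L + 1)).filter (fun pr => L + 1 ≤ pr.1 + pr.2),
            ‖aa α p q pr.1‖ * ‖bb α p q pr.2‖
              * (‖x‖) ^ (L + 1) := by
          refine Finset.sum_le_sum fun pr hpr => ?_
          rw [norm_mul, norm_mul, norm_pow]
          have hle : (‖x‖) ^ (pr.1 + pr.2) ≤ (‖x‖) ^ (L + 1) :=
            pow_le_pow_of_le_one (norm_nonneg _) hxle1 (Finset.mem_filter.mp hpr).2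
          exact mul_le_mul_of_nonneg_left hle
            (mul_nonneg (norm_nonneg _) (norm_nonneg _))
      _ ≤ ∑ pr ∈ range (L + 1) ×ˢ range (L + 1),
            ‖aa α p q pr.1‖ * ‖bb α p q pr.2‖
              * (‖x‖) ^ (L + 1) := by
          refine Finset.sum_le_sum_of_subset_of_nonneg (Finset.filter_subset _ _)
            fun pr _ _ => ?_
          positivity
      _ = K * (‖x‖) ^ (L + 1) := by rw [hK, Finset.sum_mul]
      _ = K / (n : ℝ) ^ (L + 1) := by
          rw [hxabs, div_eq_mul_inv, inv_pow]
  have hK0 : 0 ≤ K := by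
    rw [hK]
    exact Finset.sum_nonneg fun pr _ =>
      mul_nonneg (norm_nonneg _) (norm_nonneg _)
  -- the target polynomial
  have hT : ((α : ℂ) ^ 2) + ∑ m ∈ Finset.Icc 1 l, (((dd α p q (2 * m)).re : ℝ) : ℂ) / (n : ℂ) ^ (2 * m)
      = ∑ k ∈ range (L + 1), dd α p q k * x ^ k := by
    have : L + 1 = 2 * l + 2 := by omega
    rw [this, T_eq α p q x l]
    congr 1
    refine Finset.sum_congr rfl fun m _ => ?_
    rw [div_eq_mul_inv, inv_pow]
  -- final decomposition
  have hdecomp : u n * v n - (((α : ℂ) ^ 2)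
      + ∑ m ∈ Finset.Icc 1 l, (((dd α p q (2 * m)).re : ℝ) : ℂ) / (n : ℂ) ^ (2 * m))
      = (u n - A) * v n + A * (v n - B) + R := by
    rw [hT]
    have : (∑ k ∈ range (L + 1), dd α p q k * x ^ k) = A * B - R := by
      rw [hABT]; ring
    rw [this]
    ring
  have h2l : 2 * l + 2 = L + 1 := by omega
  rw [hdecomp, h2l]
  calc ‖(u n - A) * v n + A * (v n - B) + R‖
      ≤ ‖(u n - A) * v n‖ + ‖A * (v n - B)‖ + ‖R‖ := by
        refine le_trans (norm_add_le _ _) ?_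
        exact add_le_add_left (norm_add_le ((u n - A) * v n) (A * (v n - B))) _
    _ = ‖u n - A‖ * ‖v n‖ + ‖A‖ * ‖v n - B‖
          + ‖R‖ := by rw [norm_mul, norm_mul]
    _ ≤ (C₁ / (n : ℝ) ^ (L + 1)) * (MB + C₂) + MA * (C₂ / (n : ℝ) ^ (L + 1))
          + K / (n : ℝ) ^ (L + 1) := by
        refine add_le_add (add_le_add ?_ ?_) hRbound
        · exact mul_le_mul huA hvbound (norm_nonneg _)
            (div_nonneg hC₁0 (le_of_lt hnpow))
        · exact mul_le_mul hAbound hvB (norm_nonneg _) hMA0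
    _ = (C₁ * (MB + C₂) + MA * C₂ + K) / (n : ℝ) ^ (L + 1) := by
        field_simp
end
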